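/- Let λ₁ > L_F > 0 and let g : [0,T] → [0,∞) be integrable. Suppose φ : [0,T] → [0,∞) is integrable and for all t ∈ [0,T], φ(t) ≤ (1/ε)∫₀^t e^{-λ₁(t-s)/ε}(g(s) + L_F φ(s)) ds, where ε > 0. Then ∫₀^T φ(t) dt ≤ (1/(λ₁ - L_F)) ∫₀^T g(s) ds. -/

import Mathlib

open intervalIntegral

open MeasureTheory ENNReal in
private lemma exp_int_bound' (lam ε s T : ℝ) (hlam : 0 < lam) (hε : 0 < ε) :
    ∫ t in s..T, Real.exp (-lam * (t - s) / ε) ≤ ε / lam := by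
  have hc : (-(lam/ε)) ≠ 0 := by
    have : 0 < lam/ε := div_pos hlam hε
    linarith
  have h1 : ∀ t, Real.exp (-lam * (t - s) / ε) = Real.exp ((-(lam/ε)) * (t - s)) := by
    intro t; ring_nf
  simp_rw [h1]
  have h2 : (∫ t in s..T, Real.exp ((-(lam/ε)) * (t - s)))
      = ∫ u in (0:ℝ)..(T - s), Real.exp ((-(lam/ε)) * u) := by
    have := intervalIntegral.integral_comp_sub_right (a := s) (b := T)
      (fun u => Real.exp ((-(lam/ε)) * u)) s
    simpa using this
  rw [h2]
  rw [intervalIntegral.integral_comp_mul_left (fun x => Real.exp x) hc]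
  rw [integral_exp]
  have h4 : Real.exp ((-(lam/ε)) * 0) = 1 := by simp
  rw [h4, smul_eq_mul]
  have hinv : (-(lam/ε))⁻¹ = -(ε/lam) := by
    rw [← one_div, div_neg, one_div_div]
  rw [hinv]
  have h5 : (0:ℝ) < ε / lam := div_pos hε hlam
  nlinarith [Real.exp_pos ((-(lam/ε)) * (T - s))]

open MeasureTheory ENNReal in
theorem stmt_8 (lam LF T ε : ℝ) (hLF : 0 < LF) (hlam : LF < lam) (hT : 0 < T) (hε : 0 < ε)
    (g φ : ℝ → ℝ)
    (hg0 : ∀ t ∈ Set.Icc 0 T, 0 ≤ g t) (hφ0 : ∀ t ∈ Set.Icc 0 T, 0 ≤ φ t)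
    (hgint : MeasureTheory.IntegrableOn g (Set.Icc 0 T))
    (hφint : MeasureTheory.IntegrableOn φ (Set.Icc 0 T))
    (hineq : ∀ t ∈ Set.Icc 0 T,
      φ t ≤ (1 / ε) * ∫ s in (0 : ℝ)..t, Real.exp (-lam * (t - s) / ε) * (g s + LF * φ s)) :
    (∫ t in (0 : ℝ)..T, φ t) ≤ (1 / (lam - LF)) * ∫ s in (0 : ℝ)..T, g s := by
  classical
  have hlam0 : (0:ℝ) < lam := hLF.trans hlam
  have hTle : (0:ℝ) ≤ T := hT.le
  rw [intervalIntegral.integral_of_le hTle, intervalIntegral.integral_of_le hTle]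
  set μ := MeasureTheory.volume.restrict (Set.Ioc (0:ℝ) T) with hμdef
  set h : ℝ → ℝ := fun s => g s + LF * φ s with hhdef
  have hIocIcc : Set.Ioc (0:ℝ) T ⊆ Set.Icc 0 T := Set.Ioc_subset_Icc_self
  have hφI : MeasureTheory.IntegrableOn φ (Set.Ioc 0 T) := hφint.mono_set hIocIcc
  have hgI : MeasureTheory.IntegrableOn g (Set.Ioc 0 T) := hgint.mono_set hIocIcc
  have hhIcc : MeasureTheory.IntegrableOn h (Set.Icc 0 T) := hgint.add (hφint.const_mul LF)
  have hhI : MeasureTheory.IntegrableOn h (Set.Ioc 0 T) := hhIcc.mono_set hIocIcc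
  set I := ∫ t in Set.Ioc (0:ℝ) T, φ t with hIdef
  set G := ∫ s in Set.Ioc (0:ℝ) T, g s with hGdef
  have hI0 : 0 ≤ I := setIntegral_nonneg measurableSet_Ioc (fun x hx => hφ0 x (hIocIcc hx))
  have hG0 : 0 ≤ G := setIntegral_nonneg measurableSet_Ioc (fun x hx => hg0 x (hIocIcc hx))
  have hh0 : ∀ s ∈ Set.Icc (0:ℝ) T, 0 ≤ h s := fun s hs =>
    add_nonneg (hg0 s hs) (mul_nonneg hLF.le (hφ0 s hs))
  have hhval : (∫ s in Set.Ioc (0:ℝ) T, h s) = G + LF * I := by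
    rw [hhdef]
    rw [integral_add hgI (hφI.const_mul LF), MeasureTheory.integral_const_mul]
  -- the kernel function on the product space
  set S : Set (ℝ × ℝ) := {q : ℝ × ℝ | q.2 ≤ q.1} with hSdef
  have hSm : MeasurableSet S := measurableSet_le measurable_snd measurable_fst
  set F : ℝ × ℝ → ℝ≥0∞ :=
    S.indicator (fun q => ENNReal.ofReal (Real.exp (-lam * (q.1 - q.2) / ε) * h q.2)) with hFdef
  have hFm : AEMeasurable F (μ.prod μ) := by
    have hhm : AEMeasurable h μ := hhI.aestronglyMeasurable.aemeasurable
    have h2 : AEMeasurable (fun q : ℝ × ℝ => h q.2) (μ.prod μ) := hhm.comp_snd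
    have expm : Measurable (fun q : ℝ × ℝ => Real.exp (-lam * (q.1 - q.2) / ε)) := by
      fun_prop
    exact ((expm.aemeasurable.mul h2).ennreal_ofReal).indicator hSm
  -- key estimate
  have key : I ≤ (1/lam) * (G + LF * I) := by
    have step1 : ENNReal.ofReal I = ∫⁻ t, ENNReal.ofReal (φ t) ∂μ := by
      refine ofReal_integral_eq_lintegral_ofReal hφI ?_
      exact (ae_restrict_iff' measurableSet_Ioc).2
        (Filter.Eventually.of_forall fun x hx => hφ0 x (hIocIcc hx))
    -- pointwise bound for a.e. t
    have step2 : (∫⁻ t, ENNReal.ofReal (φ t) ∂μ)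
        ≤ ∫⁻ t, ENNReal.ofReal (1/ε) * ∫⁻ s, F (t, s) ∂μ ∂μ := by
      refine lintegral_mono_ae ((ae_restrict_iff' measurableSet_Ioc).2
        (Filter.Eventually.of_forall fun t ht => ?_))
      have htIcc : t ∈ Set.Icc (0:ℝ) T := hIocIcc ht
      -- integrability of the kernel on Ioc 0 t
      have hhIt : MeasureTheory.IntegrableOn h (Set.Ioc 0 t) :=
        hhI.mono_set (Set.Ioc_subset_Ioc_right htIcc.2)
      have hkint : MeasureTheory.IntegrableOn
          (fun s => Real.exp (-lam * (t - s) / ε) * h s) (Set.Ioc 0 t) := by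
        refine MeasureTheory.Integrable.mono hhIt ?_ ?_
        · exact ((Real.continuous_exp.comp (by fun_prop)).aestronglyMeasurable).mul
            hhIt.aestronglyMeasurable
        · refine (ae_restrict_iff' measurableSet_Ioc).2
            (Filter.Eventually.of_forall fun s hs => ?_)
          have hexp1 : Real.exp (-lam * (t - s) / ε) ≤ 1 := by
            rw [Real.exp_le_one_iff]
            have : 0 ≤ t - s := by linarith [hs.2]
            have : 0 ≤ lam * (t - s) := mul_nonneg hlam0.le this
            rw [div_nonpos_iff]; right; constructor <;> nlinarith
          have hexp0 : 0 < Real.exp (-lam * (t - s) / ε) := Real.exp_pos _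
          rw [norm_mul, Real.norm_eq_abs, abs_of_pos hexp0]
          nlinarith [abs_nonneg (h s), norm_nonneg (h s)]
      have hknn : 0 ≤ᵐ[MeasureTheory.volume.restrict (Set.Ioc 0 t)]
          (fun s => Real.exp (-lam * (t - s) / ε) * h s) := by
        refine (ae_restrict_iff' measurableSet_Ioc).2
          (Filter.Eventually.of_forall fun s hs => ?_)
        have hsIcc : s ∈ Set.Icc (0:ℝ) T := ⟨hs.1.le, le_trans hs.2 htIcc.2⟩
        exact mul_nonneg (Real.exp_pos _).le (hh0 s hsIcc)
      calc ENNReal.ofReal (φ t)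
          ≤ ENNReal.ofReal ((1/ε) * ∫ s in (0:ℝ)..t,
              Real.exp (-lam * (t - s) / ε) * (g s + LF * φ s)) :=
            ENNReal.ofReal_le_ofReal (hineq t htIcc)
        _ = ENNReal.ofReal (1/ε) * ENNReal.ofReal (∫ s in Set.Ioc (0:ℝ) t,
              Real.exp (-lam * (t - s) / ε) * h s) := by
            rw [intervalIntegral.integral_of_le htIcc.1, ENNReal.ofReal_mul (by positivity)]
        _ = ENNReal.ofReal (1/ε) * ∫⁻ s in Set.Ioc (0:ℝ) t,
              ENNReal.ofReal (Real.exp (-lam * (t - s) / ε) * h s) := by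
            rw [ofReal_integral_eq_lintegral_ofReal hkint hknn]
        _ = ENNReal.ofReal (1/ε) * ∫⁻ s in Set.Ioc (0:ℝ) t, F (t, s) := by
            congr 1
            refine setLIntegral_congr_fun measurableSet_Ioc
              (fun s hs => ?_)
            have : (t, s) ∈ S := hs.2
            rw [hFdef, Set.indicator_of_mem this]
        _ ≤ ENNReal.ofReal (1/ε) * ∫⁻ s, F (t, s) ∂μ := by
            gcongr
            exact Measure.restrict_mono (Set.Ioc_subset_Ioc_right htIcc.2) le_rfl
    have step3 : (∫⁻ t, ENNReal.ofReal (1/ε) * ∫⁻ s, F (t, s) ∂μ ∂μ)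
        = ENNReal.ofReal (1/ε) * ∫⁻ t, ∫⁻ s, F (t, s) ∂μ ∂μ :=
      lintegral_const_mul' _ _ ENNReal.ofReal_ne_top
    have step4 : (∫⁻ t, ∫⁻ s, F (t, s) ∂μ ∂μ) = ∫⁻ s, ∫⁻ t, F (t, s) ∂μ ∂μ :=
      lintegral_lintegral_swap hFm
    have step5 : (∫⁻ s, ∫⁻ t, F (t, s) ∂μ ∂μ)
        ≤ ENNReal.ofReal (ε/lam) * ENNReal.ofReal (G + LF * I) := by
      have hbd : ∀ᵐ s ∂μ, (∫⁻ t, F (t, s) ∂μ) ≤ ENNReal.ofReal (ε/lam) * ENNReal.ofReal (h s) := by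
        refine (ae_restrict_iff' measurableSet_Ioc).2
          (Filter.Eventually.of_forall fun s hs => ?_)
        have hsIcc : s ∈ Set.Icc (0:ℝ) T := hIocIcc hs
        have hFs : ∀ t, F (t, s)
            = (Set.Ici s).indicator
                (fun t => ENNReal.ofReal (Real.exp (-lam * (t - s) / ε) * h s)) t := by
          intro t
          by_cases hst : s ≤ t
          · rw [hFdef, Set.indicator_of_mem (show (t, s) ∈ S from hst),
              Set.indicator_of_mem (Set.mem_Ici.2 hst)]
          · rw [hFdef, Set.indicator_of_notMem (show (t, s) ∉ S from hst),
              Set.indicator_of_notMem (by simpa using hst)]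
        calc (∫⁻ t, F (t, s) ∂μ)
            = ∫⁻ t in Set.Ici s, ENNReal.ofReal (Real.exp (-lam * (t - s) / ε) * h s) ∂μ := by
              simp_rw [hFs]; exact lintegral_indicator measurableSet_Ici _
          _ = ∫⁻ t in Set.Ici s ∩ Set.Ioc 0 T,
                ENNReal.ofReal (Real.exp (-lam * (t - s) / ε) * h s) := by
              rw [hμdef, Measure.restrict_restrict measurableSet_Ici]
          _ ≤ ∫⁻ t in Set.Icc s T,
                ENNReal.ofReal (Real.exp (-lam * (t - s) / ε) * h s) := by
              refine lintegral_mono_set fun t ht => ⟨ht.1, ht.2.2⟩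
          _ = (∫⁻ t in Set.Icc s T, ENNReal.ofReal (Real.exp (-lam * (t - s) / ε)))
                * ENNReal.ofReal (h s) := by
              simp_rw [ENNReal.ofReal_mul (Real.exp_pos _).le]
              exact lintegral_mul_const' _ _ ENNReal.ofReal_ne_top
          _ ≤ ENNReal.ofReal (ε/lam) * ENNReal.ofReal (h s) := by
              gcongr
              have hEint : MeasureTheory.IntegrableOn
                  (fun t => Real.exp (-lam * (t - s) / ε)) (Set.Icc s T) :=
                (Real.continuous_exp.comp (by fun_prop)).integrableOn_Icc
              have hEnn : 0 ≤ᵐ[MeasureTheory.volume.restrict (Set.Icc s T)]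
                  (fun t => Real.exp (-lam * (t - s) / ε)) :=
                Filter.Eventually.of_forall fun t => (Real.exp_pos _).le
              rw [← ofReal_integral_eq_lintegral_ofReal hEint hEnn]
              refine ENNReal.ofReal_le_ofReal ?_
              rw [MeasureTheory.integral_Icc_eq_integral_Ioc,
                ← intervalIntegral.integral_of_le hsIcc.2]
              exact exp_int_bound' lam ε s T hlam0 hε
      calc (∫⁻ s, ∫⁻ t, F (t, s) ∂μ ∂μ)
          ≤ ∫⁻ s, ENNReal.ofReal (ε/lam) * ENNReal.ofReal (h s) ∂μ := lintegral_mono_ae hbd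
        _ = ENNReal.ofReal (ε/lam) * ∫⁻ s, ENNReal.ofReal (h s) ∂μ :=
            lintegral_const_mul' _ _ ENNReal.ofReal_ne_top
        _ = ENNReal.ofReal (ε/lam) * ENNReal.ofReal (G + LF * I) := by
            rw [← ofReal_integral_eq_lintegral_ofReal hhI ((ae_restrict_iff' measurableSet_Ioc).2
              (Filter.Eventually.of_forall fun x hx => hh0 x (hIocIcc hx))), hhval]
    have total : ENNReal.ofReal I ≤ ENNReal.ofReal ((1/lam) * (G + LF * I)) := by
      calc ENNReal.ofReal I
          ≤ ENNReal.ofReal (1/ε) * (ENNReal.ofReal (ε/lam) * ENNReal.ofReal (G + LF * I)) := by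
            rw [step1]
            calc (∫⁻ t, ENNReal.ofReal (φ t) ∂μ)
                ≤ ∫⁻ t, ENNReal.ofReal (1/ε) * ∫⁻ s, F (t, s) ∂μ ∂μ := step2
              _ = ENNReal.ofReal (1/ε) * ∫⁻ s, ∫⁻ t, F (t, s) ∂μ ∂μ := by rw [step3, step4]
              _ ≤ _ := by gcongr
        _ = ENNReal.ofReal ((1/ε) * ((ε/lam) * (G + LF * I))) := by
            rw [ENNReal.ofReal_mul (by positivity), ENNReal.ofReal_mul (by positivity)]
        _ = ENNReal.ofReal ((1/lam) * (G + LF * I)) := by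
            congr 1
            field_simp
    have hrhs0 : 0 ≤ (1/lam) * (G + LF * I) := by positivity
    exact (ENNReal.ofReal_le_ofReal_iff hrhs0).1 total
  have hd : (0:ℝ) < lam - LF := by linarith
  have h1 : lam * I ≤ G + LF * I := by
    have h2 := mul_le_mul_of_nonneg_left key hlam0.le
    calc lam * I ≤ lam * ((1/lam) * (G + LF * I)) := h2
      _ = G + LF * I := by field_simp
  rw [one_div, inv_mul_eq_div, le_div_iff₀ hd]
  nlinarith
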